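/- With s(y) := Re(Λ(y)/(1+iy)) - π²N/12 and Λ(y) := N(π²/6 - log(2)²(1+iy)²/2 - Li₂(2^{-(1+iy)})), one has the asymptotic s(y) = N(log(2)² - π²/12)y² + O(y⁴) as y → 0. -/

import Mathlib

open Real Complex

/-- Complex dilogarithm Li₂(w) = Σ_{n≥1} wⁿ/n² (for |w| < 1 the series converges). -/
noncomputable def Li2C (w : ℂ) : ℂ := ∑' n : ℕ, w ^ (n + 1) / ((n : ℂ) + 1) ^ 2

/-- Λ(y) := N(π²/6 - log(2)²(1+iy)²/2 - Li₂(2^{-(1+iy)})). -/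
noncomputable def Lam (N : ℕ) (y : ℝ) : ℂ :=
  (N : ℂ) * ((π : ℂ) ^ 2 / 6 - (Real.log 2 : ℂ) ^ 2 * (1 + (y : ℂ) * Complex.I) ^ 2 / 2 -
    Li2C ((2 : ℂ) ^ (-(1 + (y : ℂ) * Complex.I))))

/-- s(y) := Re(Λ(y)/(1+iy)) - π²N/12. -/
noncomputable def sfun (N : ℕ) (y : ℝ) : ℝ :=
  (Lam N y / (1 + (y : ℂ) * Complex.I)).re - π ^ 2 * N / 12

lemma summable_inv_sq : Summable (fun n : ℕ => 1 / ((n : ℝ) + 1) ^ 2) := by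
  have h : Summable (fun n : ℕ => 1 / (n : ℝ) ^ 2) :=
    Real.summable_one_div_nat_pow.mpr one_lt_two
  have := (summable_nat_add_iff 1).mpr h
  simpa using this

lemma li2_summable {w : ℂ} (h : ‖w‖ ≤ 1) :
    Summable (fun n : ℕ => w ^ (n + 1) / ((n : ℂ) + 1) ^ 2) := by
  apply Summable.of_norm
  apply Summable.of_nonneg_of_le (fun n => norm_nonneg _) _ summable_inv_sq
  intro n
  have hc : ((n : ℂ) + 1) = ((n + 1 : ℕ) : ℂ) := by push_cast; ring
  rw [norm_div, norm_pow, norm_pow, hc, Complex.norm_natCast]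
  have h1 : ‖w‖ ^ (n + 1) ≤ 1 := pow_le_one₀ (norm_nonneg _) h
  have h2 : (0:ℝ) < ((n + 1 : ℕ) : ℝ) ^ 2 := by positivity
  rw [div_le_div_iff₀ h2 (by positivity)]
  push_cast
  nlinarith
lemma li2_hasSum {w : ℂ} (h : ‖w‖ ≤ 1) :
    HasSum (fun n : ℕ => w ^ (n + 1) / ((n : ℂ) + 1) ^ 2) (Li2C w) :=
  (li2_summable h).hasSum

lemma Li2C_conj (w : ℂ) : Li2C ((starRingEnd ℂ) w) = (starRingEnd ℂ) (Li2C w) := by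
  rw [Li2C, Li2C]
  rw [show ((starRingEnd ℂ) (∑' (n : ℕ), w ^ (n + 1) / ((n:ℂ) + 1) ^ 2)
      = ∑' (n : ℕ), (starRingEnd ℂ) (w ^ (n + 1) / ((n:ℂ) + 1) ^ 2)) from tsum_star]
  congr 1
  funext n
  simp [map_div₀, map_pow]

lemma hasDerivAt_Li2C {w : ℂ} (h : ‖w‖ < 1) :
    HasDerivAt Li2C (∑' n : ℕ, w ^ n / ((n : ℂ) + 1)) w := by
  set r : ℝ := (1 + ‖w‖) / 2 with hrdef
  have hr0 : 0 < r := by positivity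
  have hr1 : r < 1 := by rw [hrdef]; linarith
  have hwr : ‖w‖ < r := by rw [hrdef]; linarith
  have := hasDerivAt_tsum_of_isPreconnected
    (u := fun n : ℕ => r ^ n)
    (g := fun (n : ℕ) (z : ℂ) => z ^ (n + 1) / ((n : ℂ) + 1) ^ 2)
    (g' := fun (n : ℕ) (z : ℂ) => z ^ n / ((n : ℂ) + 1))
    (t := Metric.ball (0 : ℂ) r) (y₀ := 0) (y := w)
    (summable_geometric_of_lt_one hr0.le hr1)
    Metric.isOpen_ball (convex_ball (0:ℂ) r).isPreconnected
    ?_ ?_ (Metric.mem_ball_self hr0) ?_ (by simpa using hwr)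
  · exact this
  · intro n z hz
    have hne : ((n : ℂ) + 1) ≠ 0 := Nat.cast_add_one_ne_zero n
    have := (hasDerivAt_pow (n + 1) z).div_const (((n : ℂ) + 1) ^ 2)
    refine this.congr_deriv ?_
    push_cast
    field_simp
  · intro n z hz
    rw [norm_div, norm_pow]
    have h1 : (1:ℝ) ≤ ‖(n : ℂ) + 1‖ := by
      have hc : ((n : ℂ) + 1) = ((n + 1 : ℕ) : ℂ) := by push_cast; ring
      rw [hc, Complex.norm_natCast]
      exact_mod_cast Nat.succ_le_succ (Nat.zero_le n)
    have h2 : ‖z‖ ^ n ≤ r ^ n := by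
      apply pow_le_pow_left₀ (norm_nonneg _)
      simpa using (Metric.mem_ball.mp hz).le
    calc ‖z‖ ^ n / ‖(n : ℂ) + 1‖ ≤ ‖z‖ ^ n / 1 :=
          div_le_div_of_nonneg_left (by positivity) one_pos h1
      _ = ‖z‖ ^ n := by rw [div_one]
      _ ≤ r ^ n := h2
  · apply Summable.congr (f := fun _ : ℕ => (0:ℂ)) summable_zero
    intro n
    simp

lemma tsum_li2_deriv {w : ℂ} (h : ‖w‖ < 1) (h0 : w ≠ 0) :
    (∑' n : ℕ, w ^ n / ((n : ℂ) + 1)) = -Complex.log (1 - w) / w := by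
  have H := Complex.hasSum_taylorSeries_neg_log (z := w) h
  have H1 : HasSum (fun n : ℕ => w ^ (n + 1) / ((n + 1 : ℕ) : ℂ)) (-Complex.log (1 - w)) := by
    have := (hasSum_nat_add_iff' (f := fun n : ℕ => w ^ n / (n : ℂ)) 1).mpr H
    simpa using this
  have H2 : HasSum (fun n : ℕ => w⁻¹ * (w ^ (n + 1) / ((n + 1 : ℕ) : ℂ)))
      (w⁻¹ * -Complex.log (1 - w)) := H1.mul_left _
  have H3 : HasSum (fun n : ℕ => w ^ n / ((n : ℂ) + 1)) (w⁻¹ * -Complex.log (1 - w)) := by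
    apply HasSum.congr_fun H2
    intro n
    push_cast
    rw [← mul_div_assoc, pow_succ']
    rw [← mul_assoc, inv_mul_cancel₀ h0, one_mul]
  rw [H3.tsum_eq, neg_div, div_eq_inv_mul, ← mul_neg]

lemma hasDerivAt_Li2C' {w : ℂ} (h : ‖w‖ < 1) (h0 : w ≠ 0) :
    HasDerivAt Li2C (-Complex.log (1 - w) / w) w := by
  rw [← tsum_li2_deriv h h0]
  exact hasDerivAt_Li2C h

noncomputable def Li2R (x : ℝ) : ℝ := ∑' n : ℕ, x ^ (n + 1) / ((n : ℝ) + 1) ^ 2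

lemma Li2C_ofReal (x : ℝ) : Li2C (x : ℂ) = ((Li2R x : ℝ) : ℂ) := by
  rw [Li2R, Complex.ofReal_tsum, Li2C]
  congr 1
  funext n
  push_cast
  ring

lemma Li2R_re (x : ℝ) : (Li2C (x : ℂ)).re = Li2R x := by
  rw [Li2C_ofReal, Complex.ofReal_re]

lemma hasDerivAt_Li2R {x : ℝ} (h : |x| < 1) (h0 : x ≠ 0) :
    HasDerivAt Li2R (-Real.log (1 - x) / x) x := by
  have hx1 : x < 1 := lt_of_le_of_lt (le_abs_self x) h
  have hc : HasDerivAt Li2C (-Complex.log (1 - (x:ℂ)) / (x:ℂ)) (x:ℂ) :=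
    hasDerivAt_Li2C' (by rwa [Complex.norm_real]) (by exact_mod_cast h0)
  have := hc.real_of_complex
  have heq : (fun y : ℝ => (Li2C (y:ℂ)).re) = Li2R := funext Li2R_re
  rw [heq] at this
  convert this using 1
  have h1 : (1 : ℂ) - (x : ℂ) = ((1 - x : ℝ) : ℂ) := by push_cast; ring
  rw [h1, ← Complex.ofReal_log (by linarith)]
  rw [show (-(Real.log (1-x) : ℂ) / (x:ℂ)) = (((-Real.log (1-x) / x : ℝ)):ℂ) by push_cast; ring]
  rw [Complex.ofReal_re]

noncomputable def Rf (x : ℝ) : ℝ := Li2R x + Li2R (1 - x) + Real.log x * Real.log (1 - x)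

lemma hasDerivAt_Rf {x : ℝ} (hx : x ∈ Set.Ioo (0:ℝ) 1) : HasDerivAt Rf 0 x := by
  obtain ⟨hx0, hx1⟩ := hx
  have hxne : x ≠ 0 := ne_of_gt hx0
  have h1xne : 1 - x ≠ 0 := by linarith
  have h1 : HasDerivAt Li2R (-Real.log (1 - x) / x) x :=
    hasDerivAt_Li2R (abs_lt.mpr ⟨by linarith, hx1⟩) hxne
  have hinner : HasDerivAt (fun y : ℝ => 1 - y) (-1) x := by
    simpa using (hasDerivAt_id x).const_sub 1
  have h2out : HasDerivAt Li2R (-Real.log (1 - (1 - x)) / (1 - x)) (1 - x) :=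
    hasDerivAt_Li2R (abs_lt.mpr ⟨by linarith, by linarith⟩) h1xne
  have h2 : HasDerivAt (fun y : ℝ => Li2R (1 - y))
      ((-Real.log (1 - (1 - x)) / (1 - x)) * (-1)) x := h2out.comp x hinner
  have hlogx : HasDerivAt Real.log x⁻¹ x := Real.hasDerivAt_log hxne
  have hlog1x : HasDerivAt (fun y : ℝ => Real.log (1 - y)) ((1 - x)⁻¹ * (-1)) x :=
    (Real.hasDerivAt_log h1xne).comp x hinner
  have h3 : HasDerivAt (fun y : ℝ => Real.log y * Real.log (1 - y))
      (x⁻¹ * Real.log (1 - x) + Real.log x * ((1 - x)⁻¹ * (-1))) x := hlogx.mul hlog1x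
  have := (h1.add h2).add h3
  refine this.congr_deriv ?_
  have hsimp : 1 - (1 - x) = x := by ring
  rw [hsimp]
  field_simp
  ring

lemma Li2R_one : Li2R 1 = π ^ 2 / 6 := by
  have H := hasSum_zeta_two
  have H1 : HasSum (fun n : ℕ => (1:ℝ) / ((n + 1 : ℕ) : ℝ) ^ 2) (π ^ 2 / 6) := by
    have := (hasSum_nat_add_iff' (f := fun n : ℕ => (1:ℝ) / (n : ℝ) ^ 2) 1).mpr H
    simpa using this
  rw [Li2R]
  have H2 : HasSum (fun n : ℕ => (1:ℝ) ^ (n + 1) / ((n : ℝ) + 1) ^ 2) (π ^ 2 / 6) := by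
    apply H1.congr_fun
    intro n
    push_cast
    ring
  exact H2.tsum_eq

lemma Li2R_zero : Li2R 0 = 0 := by
  rw [Li2R]
  have : ∀ n : ℕ, (0:ℝ) ^ (n + 1) / ((n : ℝ) + 1) ^ 2 = 0 := by
    intro n
    rw [zero_pow (Nat.succ_ne_zero n), zero_div]
  simp [this]

lemma Li2R_continuousOn : ContinuousOn Li2R (Set.Icc (-1:ℝ) 1) := by
  apply continuousOn_tsum (u := fun n : ℕ => 1 / ((n : ℝ) + 1) ^ 2)
  · intro i
    exact (continuous_pow (i+1)).continuousOn.div_const _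
  · exact summable_inv_sq
  · intro n x hx
    have hx1 : |x| ≤ 1 := abs_le.mpr ⟨hx.1, hx.2⟩
    have hp : (0:ℝ) < ((n : ℝ) + 1) ^ 2 := by positivity
    rw [Real.norm_eq_abs, abs_div, abs_of_pos hp]
    gcongr
    calc |x ^ (n+1)| = |x| ^ (n+1) := abs_pow x (n+1)
      _ ≤ 1 := pow_le_one₀ (abs_nonneg x) hx1

lemma log_mul_log_bound {x : ℝ} (hx : x ∈ Set.Icc (1/2 : ℝ) 1) :
    |Real.log x * Real.log (1 - x)| ≤ 4 * Real.sqrt (1 - x) := by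
  obtain ⟨hl, hr⟩ := hx
  rcases eq_or_lt_of_le hr with h1 | h1
  · subst h1
    simp
  · have hx0 : 0 < x := by linarith
    have ht0 : 0 < 1 - x := by linarith
    -- |log x| ≤ 2 (1 - x)
    have hlogx_le : |Real.log x| ≤ 2 * (1 - x) := by
      have hlx : Real.log x ≤ 0 := Real.log_nonpos hx0.le hr
      rw [abs_of_nonpos hlx]
      have : Real.log x⁻¹ ≤ x⁻¹ - 1 := Real.log_le_sub_one_of_pos (by positivity)
      rw [Real.log_inv] at this
      have hineq : x⁻¹ - 1 ≤ 2 * (1 - x) := by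
        rw [inv_eq_one_div, div_sub' (ne_of_gt hx0)]
        rw [div_le_iff₀ hx0]
        nlinarith
      linarith
    -- |log (1-x)| ≤ 2 / sqrt (1-x)
    have hlog1x_le : |Real.log (1 - x)| ≤ 2 / Real.sqrt (1 - x) := by
      have hl1 : Real.log (1 - x) ≤ 0 := Real.log_nonpos ht0.le (by linarith)
      rw [abs_of_nonpos hl1]
      have h2 : -Real.log (1 - x) = Real.log (1 - x)⁻¹ := (Real.log_inv _).symm
      rw [h2]
      have hs : Real.sqrt (1 - x)⁻¹ = (Real.sqrt (1 - x))⁻¹ := Real.sqrt_inv _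
      have hlog_sqrt : Real.log (1 - x)⁻¹ = 2 * Real.log (Real.sqrt (1 - x)⁻¹) := by
        rw [Real.log_sqrt (by positivity)]
        ring
      rw [hlog_sqrt]
      have : Real.log (Real.sqrt (1 - x)⁻¹) ≤ Real.sqrt (1 - x)⁻¹ - 1 :=
        Real.log_le_sub_one_of_pos (by positivity)
      have hfin : Real.sqrt (1 - x)⁻¹ - 1 ≤ (Real.sqrt (1 - x))⁻¹ := by
        rw [hs]; linarith
      calc 2 * Real.log (Real.sqrt (1 - x)⁻¹) ≤ 2 * ((Real.sqrt (1-x))⁻¹) := by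
            have := this.trans hfin; linarith
        _ = 2 / Real.sqrt (1 - x) := by rw [div_eq_mul_inv]
    have hsq : 0 < Real.sqrt (1 - x) := Real.sqrt_pos.mpr ht0
    rw [abs_mul]
    calc |Real.log x| * |Real.log (1 - x)| ≤ (2 * (1 - x)) * (2 / Real.sqrt (1 - x)) := by
          apply mul_le_mul hlogx_le hlog1x_le (abs_nonneg _) (by positivity)
      _ = 4 * ((1 - x) / Real.sqrt (1 - x)) := by ring
      _ = 4 * Real.sqrt (1 - x) := by rw [Real.div_sqrt]

lemma Rf_continuousOn : ContinuousOn Rf (Set.Icc (1/2 : ℝ) 1) := by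
  intro x hx
  rcases eq_or_lt_of_le hx.2 with h1 | h1
  · -- x = 1 : continuity within from the limits
    subst h1
    have hRf1 : Rf 1 = π ^ 2 / 6 := by
      rw [Rf, Li2R_one]
      norm_num [Li2R_zero, Real.log_one]
    rw [ContinuousWithinAt, hRf1]
    have hsub : Set.Icc (1/2:ℝ) 1 ⊆ Set.Icc (-1:ℝ) 1 := by
      intro y hy; exact ⟨by linarith [hy.1], hy.2⟩
    -- term 1 : Li2R x → Li2R 1
    have t1 : Filter.Tendsto Li2R (nhdsWithin 1 (Set.Icc (1/2:ℝ) 1)) (nhds (π^2/6)) := by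
      have := (Li2R_continuousOn 1 (by norm_num)).mono hsub
      rw [ContinuousWithinAt, Li2R_one] at this
      exact this
    -- term 2 : Li2R (1 - x) → Li2R 0 = 0
    have t2 : Filter.Tendsto (fun x => Li2R (1 - x)) (nhdsWithin 1 (Set.Icc (1/2:ℝ) 1))
        (nhds 0) := by
      have hc : ContinuousWithinAt (fun x : ℝ => 1 - x) (Set.Icc (1/2:ℝ) 1) 1 :=
        (continuous_const.sub continuous_id).continuousWithinAt
      have hmaps : Set.MapsTo (fun x : ℝ => 1 - x) (Set.Icc (1/2:ℝ) 1) (Set.Icc (-1:ℝ) 1) := by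
        intro y hy
        constructor <;> simp <;> [linarith [hy.2]; linarith [hy.1]]
      have houter : ContinuousWithinAt Li2R (Set.Icc (-1:ℝ) 1) ((fun x : ℝ => 1 - x) 1) := by
        simpa using Li2R_continuousOn 0 (by norm_num)
      have := houter.comp hc hmaps
      rw [ContinuousWithinAt] at this
      simpa [Function.comp_def, Li2R_zero] using this
    -- term 3 : log x log (1-x) → 0
    have t3 : Filter.Tendsto (fun x => Real.log x * Real.log (1 - x))
        (nhdsWithin 1 (Set.Icc (1/2:ℝ) 1)) (nhds 0) := by
      apply squeeze_zero_norm' ?_ ?_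
      · exact fun x => 4 * Real.sqrt (1 - x)
      · filter_upwards [self_mem_nhdsWithin] with x hx
        exact log_mul_log_bound hx
      · have hc : ContinuousWithinAt (fun x : ℝ => 4 * Real.sqrt (1 - x))
            (Set.Icc (1/2:ℝ) 1) 1 :=
          (continuous_const.mul ((Real.continuous_sqrt).comp
            (continuous_const.sub continuous_id))).continuousWithinAt
        rw [ContinuousWithinAt] at hc
        simpa using hc
    have := (t1.add t2).add t3
    delta Rf
    simpa using this
  · -- interior : continuity from differentiability
    have hR := hasDerivAt_Rf (x := x) ⟨by linarith [hx.1], h1⟩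
    exact hR.continuousAt.continuousWithinAt

lemma Li2R_half : Li2R (1/2) = π ^ 2 / 12 - (Real.log 2) ^ 2 / 2 := by
  have hconst := constant_of_has_deriv_right_zero (f := Rf) (a := (1/2:ℝ)) (b := 1)
    Rf_continuousOn ?_
  · have h1 := hconst 1 (by norm_num)
    have hRf1 : Rf 1 = π ^ 2 / 6 := by
      rw [Rf, Li2R_one]
      norm_num [Li2R_zero, Real.log_one]
    have hRfhalf : Rf (1/2) = 2 * Li2R (1/2) + (Real.log 2) ^ 2 := by
      rw [Rf]
      have h12 : (1:ℝ) - 1/2 = 1/2 := by norm_num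
      rw [h12]
      have hlog : Real.log (1/2) = -Real.log 2 := by
        rw [one_div, Real.log_inv]
      rw [hlog]
      ring
    rw [hRf1, hRfhalf] at h1
    linarith
  · intro y hy
    have : HasDerivAt Rf 0 y := hasDerivAt_Rf ⟨by linarith [hy.1], hy.2⟩
    exact this.hasDerivWithinAt

lemma Li2C_half : Li2C (1/2 : ℂ) = ((π ^ 2 / 12 - (Real.log 2) ^ 2 / 2 : ℝ) : ℂ) := by
  have h : ((1:ℂ)/2) = (((1:ℝ)/2 : ℝ) : ℂ) := by push_cast; ring
  rw [h, Li2C_ofReal, Li2R_half]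

noncomputable def Ec (u : ℂ) : ℂ := Complex.exp (-(Real.log 2 : ℂ) * u)

lemma two_cpow_eq (u : ℂ) : (2 : ℂ) ^ (-u) = Ec u := by
  rw [Complex.cpow_def_of_ne_zero two_ne_zero, Ec]
  congr 1
  have h2 : (2:ℂ) = ((2:ℝ) : ℂ) := by norm_num
  rw [h2, ← Complex.ofReal_log (by norm_num : (0:ℝ) ≤ 2)]
  ring

lemma Ec_ne_zero (u : ℂ) : Ec u ≠ 0 := Complex.exp_ne_zero _

lemma norm_Ec_lt_one {u : ℂ} (h : 0 < u.re) : ‖Ec u‖ < 1 := by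
  rw [Ec, Complex.norm_exp]
  have hre : (-(Real.log 2 : ℂ) * u).re = -(Real.log 2 * u.re) := by
    rw [neg_mul, Complex.neg_re, Complex.re_ofReal_mul]
  rw [hre]
  have hlog2 : 0 < Real.log 2 := Real.log_pos one_lt_two
  exact Real.exp_lt_one_iff.mpr (by nlinarith)

lemma one_sub_Ec_re {u : ℂ} (h : 0 < u.re) : 0 < (1 - Ec u).re := by
  have hre : (Ec u).re ≤ ‖Ec u‖ := Complex.re_le_norm _
  have := norm_Ec_lt_one h
  simp only [Complex.sub_re, Complex.one_re]
  linarith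

lemma one_sub_Ec_slitPlane {u : ℂ} (h : 0 < u.re) : (1 - Ec u) ∈ Complex.slitPlane :=
  Complex.mem_slitPlane_iff.mpr (Or.inl (one_sub_Ec_re h))

lemma one_sub_Ec_ne_zero {u : ℂ} (h : 0 < u.re) : (1 - Ec u) ≠ 0 :=
  Complex.slitPlane_ne_zero (one_sub_Ec_slitPlane h)

noncomputable def psi0 (u : ℂ) : ℂ :=
  (π : ℂ) ^ 2 / 6 - (Real.log 2 : ℂ) ^ 2 * u ^ 2 / 2 - Li2C (Ec u)

noncomputable def psi1 (u : ℂ) : ℂ :=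
  -(Real.log 2 : ℂ) ^ 2 * u - (Real.log 2 : ℂ) * Complex.log (1 - Ec u)

noncomputable def psi2 (u : ℂ) : ℂ :=
  -(Real.log 2 : ℂ) ^ 2 - (Real.log 2 : ℂ) ^ 2 * Ec u / (1 - Ec u)

lemma hasDerivAt_Ec (u : ℂ) : HasDerivAt Ec (-(Real.log 2 : ℂ) * Ec u) u := by
  have h1 : HasDerivAt (fun u : ℂ => -(Real.log 2 : ℂ) * u) (-(Real.log 2 : ℂ)) u := by
    simpa using (hasDerivAt_id u).const_mul (-(Real.log 2 : ℂ))
  have h2 := h1.cexp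
  rw [mul_comm] at h2
  exact h2

lemma hasDerivAt_psi0 {u : ℂ} (h : 0 < u.re) : HasDerivAt psi0 (psi1 u) u := by
  have hLi : HasDerivAt Li2C (-Complex.log (1 - Ec u) / Ec u) (Ec u) :=
    hasDerivAt_Li2C' (norm_Ec_lt_one h) (Ec_ne_zero u)
  have hcomp : HasDerivAt (fun u : ℂ => Li2C (Ec u))
      ((-Complex.log (1 - Ec u) / Ec u) * (-(Real.log 2 : ℂ) * Ec u)) u :=
    hLi.comp u (hasDerivAt_Ec u)
  have h1 : HasDerivAt (fun u : ℂ => (π : ℂ) ^ 2 / 6) 0 u := hasDerivAt_const u _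
  have h2 : HasDerivAt (fun u : ℂ => (Real.log 2 : ℂ) ^ 2 * u ^ 2 / 2)
      ((Real.log 2 : ℂ) ^ 2 * (2 * u ^ 1) / 2) u :=
    ((hasDerivAt_pow 2 u).const_mul ((Real.log 2 : ℂ) ^ 2)).div_const 2
  have := (h1.sub h2).sub hcomp
  refine this.congr_deriv ?_
  rw [psi1]
  have hne := Ec_ne_zero u
  field_simp
  ring

lemma hasDerivAt_psi1 {u : ℂ} (h : 0 < u.re) : HasDerivAt psi1 (psi2 u) u := by
  have hinner := (hasDerivAt_const u (1:ℂ)).sub (hasDerivAt_Ec u)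
  have hlog := hinner.clog (one_sub_Ec_slitPlane h)
  have h1 : HasDerivAt (fun u : ℂ => -(Real.log 2 : ℂ) ^ 2 * u) (-(Real.log 2 : ℂ) ^ 2) u := by
    simpa using (hasDerivAt_id u).const_mul (-(Real.log 2 : ℂ) ^ 2)
  have := h1.sub (hlog.const_mul (Real.log 2 : ℂ))
  refine this.congr_deriv ?_
  rw [psi2]
  have hne := one_sub_Ec_ne_zero h
  simp only [Pi.sub_apply]
  field_simp
  ring

noncomputable def Gf (z : ℂ) : ℂ := psi0 (1 + z) / (1 + z)
noncomputable def Gf1 (z : ℂ) : ℂ := psi1 (1 + z) / (1 + z) - psi0 (1 + z) / (1 + z) ^ 2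
noncomputable def Gf2 (z : ℂ) : ℂ :=
  psi2 (1 + z) / (1 + z) - 2 * psi1 (1 + z) / (1 + z) ^ 2 + 2 * psi0 (1 + z) / (1 + z) ^ 3

lemma oneadd_ne_zero {z : ℂ} (h : 0 < (1 + z).re) : (1 + z) ≠ 0 := by
  intro hz
  rw [hz] at h
  simp at h

lemma hasDerivAt_oneadd (z : ℂ) : HasDerivAt (fun z : ℂ => 1 + z) 1 z := by
  simpa using (hasDerivAt_id z).const_add 1

lemma hasDerivAt_Gf {z : ℂ} (h : 0 < (1 + z).re) : HasDerivAt Gf (Gf1 z) z := by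
  have hnum : HasDerivAt (fun z : ℂ => psi0 (1 + z)) (psi1 (1 + z) * 1) z :=
    (hasDerivAt_psi0 h).comp z (hasDerivAt_oneadd z)
  have := hnum.div (hasDerivAt_oneadd z) (oneadd_ne_zero h)
  refine this.congr_deriv ?_
  rw [Gf1]
  have hne := oneadd_ne_zero h
  field_simp

lemma hasDerivAt_Gf1 {z : ℂ} (h : 0 < (1 + z).re) : HasDerivAt Gf1 (Gf2 z) z := by
  have hne := oneadd_ne_zero h
  have hnum1 : HasDerivAt (fun z : ℂ => psi1 (1 + z)) (psi2 (1 + z) * 1) z :=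
    (hasDerivAt_psi1 h).comp z (hasDerivAt_oneadd z)
  have hnum0 : HasDerivAt (fun z : ℂ => psi0 (1 + z)) (psi1 (1 + z) * 1) z :=
    (hasDerivAt_psi0 h).comp z (hasDerivAt_oneadd z)
  have hq1 := hnum1.div (hasDerivAt_oneadd z) hne
  have hden2 : HasDerivAt (fun z : ℂ => (1 + z) ^ 2) (2 * (1 + z) ^ 1 * 1) z :=
    (hasDerivAt_pow 2 (1 + z)).comp z (hasDerivAt_oneadd z)
  have hq2 := hnum0.div hden2 (pow_ne_zero 2 hne)
  have := hq1.sub hq2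
  refine this.congr_deriv ?_
  rw [Gf2]
  field_simp
  ring

lemma Ec_one : Ec 1 = 1 / 2 := by
  rw [Ec, mul_one]
  rw [show (-(Real.log 2 : ℂ)) = ((-Real.log 2 : ℝ) : ℂ) by push_cast; ring]
  rw [← Complex.ofReal_exp]
  rw [Real.exp_neg, Real.exp_log two_pos]
  norm_num

lemma psi0_one : psi0 1 = ((π ^ 2 / 12 : ℝ) : ℂ) := by
  rw [psi0, Ec_one, Li2C_half]
  push_cast
  ring

lemma psi1_one : psi1 1 = 0 := by
  rw [psi1, Ec_one]
  have h12 : (1 : ℂ) - 1 / 2 = (((1:ℝ)/2 : ℝ) : ℂ) := by push_cast; ring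
  rw [h12, ← Complex.ofReal_log (by norm_num : (0:ℝ) ≤ 1/2)]
  have hlog : Real.log (1/2) = -Real.log 2 := by rw [one_div, Real.log_inv]
  rw [hlog]
  push_cast
  ring

lemma psi2_one : psi2 1 = -2 * (Real.log 2 : ℂ) ^ 2 := by
  rw [psi2, Ec_one]
  norm_num
  ring

lemma Gf_zero : Gf 0 = ((π ^ 2 / 12 : ℝ) : ℂ) := by
  rw [Gf]
  norm_num [psi0_one]

lemma Gf1_zero : Gf1 0 = -((π ^ 2 / 12 : ℝ) : ℂ) := by
  rw [Gf1]
  norm_num [psi0_one, psi1_one]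

lemma Gf2_zero : Gf2 0 = -2 * (Real.log 2 : ℂ) ^ 2 + ((π ^ 2 / 6 : ℝ) : ℂ) := by
  rw [Gf2]
  norm_num [psi0_one, psi1_one, psi2_one]
  push_cast
  ring

lemma conj_log_two : (starRingEnd ℂ) (Complex.log 2) = Complex.log 2 := by
  have h2 : (2:ℂ) = ((2:ℝ) : ℂ) := by norm_num
  rw [h2, ← Complex.ofReal_log (by norm_num : (0:ℝ) ≤ 2), Complex.conj_ofReal]

lemma Ec_conj (u : ℂ) : Ec ((starRingEnd ℂ) u) = (starRingEnd ℂ) (Ec u) := by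
  rw [Ec, Ec, ← Complex.exp_conj]
  congr 1
  rw [map_mul, map_neg, Complex.conj_ofReal]

lemma psi0_conj (u : ℂ) : psi0 ((starRingEnd ℂ) u) = (starRingEnd ℂ) (psi0 u) := by
  rw [psi0, psi0, Ec_conj, Li2C_conj]
  simp [map_sub, map_div₀, map_mul, map_pow, map_ofNat, Complex.conj_ofReal, conj_log_two]

lemma psi1_conj {u : ℂ} (h : 0 < u.re) : psi1 ((starRingEnd ℂ) u) = (starRingEnd ℂ) (psi1 u) := by
  have harg : (1 - Ec u).arg ≠ π := Complex.slitPlane_arg_ne_pi (one_sub_Ec_slitPlane h)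
  rw [psi1, psi1, Ec_conj]
  rw [show (1 : ℂ) - (starRingEnd ℂ) (Ec u) = (starRingEnd ℂ) (1 - Ec u) by
    rw [map_sub, map_one]]
  rw [Complex.log_conj _ harg]
  simp [map_sub, map_mul, map_neg, map_pow, Complex.conj_ofReal, conj_log_two]

lemma psi2_conj (u : ℂ) : psi2 ((starRingEnd ℂ) u) = (starRingEnd ℂ) (psi2 u) := by
  rw [psi2, psi2, Ec_conj]
  simp [map_sub, map_div₀, map_mul, map_neg, map_pow, Complex.conj_ofReal, conj_log_two]

lemma Gf2_conj {z : ℂ} (h : 0 < (1 + z).re) :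
    Gf2 ((starRingEnd ℂ) z) = (starRingEnd ℂ) (Gf2 z) := by
  have h1 : (1 : ℂ) + (starRingEnd ℂ) z = (starRingEnd ℂ) (1 + z) := by
    rw [map_add, map_one]
  rw [Gf2, Gf2, h1, psi2_conj, psi0_conj, psi1_conj h]
  simp [map_add, map_sub, map_div₀, map_mul, map_pow, map_ofNat]

noncomputable def Ff (y : ℝ) : ℝ := (Gf ((y : ℂ) * Complex.I)).re
noncomputable def Ff1 (y : ℝ) : ℝ := (Gf1 ((y : ℂ) * Complex.I) * Complex.I).re
noncomputable def Ff2 (y : ℝ) : ℝ := (Gf2 ((y : ℂ) * Complex.I) * Complex.I * Complex.I).re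

lemma re_one_add_mul_I (z : ℂ) : (1 + z * Complex.I).re = 1 - z.im := by
  simp [Complex.add_re, Complex.mul_re]
  ring

lemma re_one_add_ofReal_mul_I (y : ℝ) : 0 < (1 + (y : ℂ) * Complex.I).re := by
  rw [re_one_add_mul_I]
  simp

lemma hasDerivAt_Ff (y : ℝ) : HasDerivAt Ff (Ff1 y) y := by
  have hG : HasDerivAt Gf (Gf1 ((y : ℂ) * Complex.I)) ((y : ℂ) * Complex.I) :=
    hasDerivAt_Gf (re_one_add_ofReal_mul_I y)
  have hmul : HasDerivAt (fun z : ℂ => z * Complex.I) Complex.I ((y : ℂ)) := by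
    simpa using (hasDerivAt_id ((y : ℂ))).mul_const Complex.I
  have hcomp : HasDerivAt (fun z : ℂ => Gf (z * Complex.I))
      (Gf1 ((y : ℂ) * Complex.I) * Complex.I) ((y : ℂ)) := HasDerivAt.comp (h₂ := Gf) ((y:ℂ)) hG hmul
  exact hcomp.real_of_complex

lemma hasDerivAt_Ff1 (y : ℝ) : HasDerivAt Ff1 (Ff2 y) y := by
  have hG : HasDerivAt Gf1 (Gf2 ((y : ℂ) * Complex.I)) ((y : ℂ) * Complex.I) :=
    hasDerivAt_Gf1 (re_one_add_ofReal_mul_I y)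
  have hmul : HasDerivAt (fun z : ℂ => z * Complex.I) Complex.I ((y : ℂ)) := by
    simpa using (hasDerivAt_id ((y : ℂ))).mul_const Complex.I
  have hcomp : HasDerivAt (fun z : ℂ => Gf1 (z * Complex.I))
      (Gf2 ((y : ℂ) * Complex.I) * Complex.I) ((y : ℂ)) := HasDerivAt.comp (h₂ := Gf1) ((y:ℂ)) hG hmul
  have hcomp2 : HasDerivAt (fun z : ℂ => Gf1 (z * Complex.I) * Complex.I)
      (Gf2 ((y : ℂ) * Complex.I) * Complex.I * Complex.I) ((y : ℂ)) := hcomp.mul_const _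
  exact hcomp2.real_of_complex

lemma Ff_zero : Ff 0 = π ^ 2 / 12 := by
  rw [Ff]
  simp only [Complex.ofReal_zero, zero_mul, Gf_zero, Complex.ofReal_re]

lemma Ff1_zero : Ff1 0 = 0 := by
  rw [Ff1]
  simp only [Complex.ofReal_zero, zero_mul, Gf1_zero]
  rw [neg_mul, Complex.neg_re, Complex.mul_re, Complex.ofReal_im, Complex.I_re]
  ring

lemma Ff2_zero : Ff2 0 = 2 * (Real.log 2) ^ 2 - π ^ 2 / 6 := by
  rw [Ff2]
  simp only [Complex.ofReal_zero, zero_mul]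
  have hval : Gf2 0 * Complex.I * Complex.I = ((2 * (Real.log 2) ^ 2 - π ^ 2 / 6 : ℝ) : ℂ) := by
    rw [mul_assoc, Complex.I_mul_I, Gf2_zero]
    push_cast
    ring
  rw [hval, Complex.ofReal_re]

lemma Ff2_even (y : ℝ) : Ff2 (-y) = Ff2 y := by
  have hconj : ((-y : ℝ) : ℂ) * Complex.I = (starRingEnd ℂ) ((y : ℂ) * Complex.I) := by
    rw [map_mul, Complex.conj_ofReal, Complex.conj_I]
    push_cast
    ring
  rw [Ff2, Ff2, hconj, Gf2_conj (re_one_add_ofReal_mul_I y)]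
  rw [mul_assoc, mul_assoc, Complex.I_mul_I]
  simp

lemma deriv_even_zero (f : ℝ → ℝ) (hf : ∀ y, f (-y) = f y) : deriv f 0 = 0 := by
  by_cases h : DifferentiableAt ℝ f 0
  · have hd := h.hasDerivAt
    have hneg : HasDerivAt (fun y : ℝ => f (-y)) (-(deriv f 0)) 0 := by
      have h0 : HasDerivAt (fun y : ℝ => -y) (-1 : ℝ) 0 := by
        exact hasDerivAt_neg' (0:ℝ)
      have hd0 : HasDerivAt f (deriv f 0) (-(0:ℝ)) := by rw [neg_zero]; exact hd
      have := HasDerivAt.comp (0:ℝ) hd0 h0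
      exact this.congr_deriv (by ring)
    have heq : (fun y : ℝ => f (-y)) = f := funext hf
    rw [heq] at hneg
    have := hneg.unique hd
    linarith
  · exact deriv_zero_of_not_differentiableAt h

lemma analyticAt_Ff : AnalyticAt ℝ Ff 0 := by
  have hUopen : IsOpen {z : ℂ | 0 < (1 + z * Complex.I).re} := by
    have : {z : ℂ | 0 < (1 + z * Complex.I).re}
        = (fun z : ℂ => (1 + z * Complex.I).re) ⁻¹' Set.Ioi 0 := rfl
    rw [this]
    apply IsOpen.preimage ?_ isOpen_Ioi
    exact Complex.continuous_re.comp (continuous_const.add (continuous_id.mul continuous_const))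
  have hdiff : DifferentiableOn ℂ (fun z => Gf (z * Complex.I))
      {z : ℂ | 0 < (1 + z * Complex.I).re} := by
    intro z hz
    have hG : HasDerivAt Gf (Gf1 (z * Complex.I)) (z * Complex.I) := hasDerivAt_Gf hz
    have hmul : HasDerivAt (fun z : ℂ => z * Complex.I) Complex.I z := by
      simpa using (hasDerivAt_id z).mul_const Complex.I
    exact (HasDerivAt.comp z hG hmul).differentiableAt.differentiableWithinAt
  have h0U : (0:ℂ) ∈ {z : ℂ | 0 < (1 + z * Complex.I).re} := by
    simp [Set.mem_setOf_eq, re_one_add_mul_I]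
  have hHc : AnalyticAt ℂ (fun z => Gf (z * Complex.I)) 0 :=
    hdiff.analyticAt (hUopen.mem_nhds h0U)
  have h1 : AnalyticAt ℝ (fun z => Gf (z * Complex.I)) 0 := hHc.restrictScalars
  have hof : AnalyticAt ℝ (fun y : ℝ => (y : ℂ)) 0 := Complex.ofRealCLM.analyticAt 0
  have h1' : AnalyticAt ℝ (fun z => Gf (z * Complex.I)) ((fun y : ℝ => (y : ℂ)) 0) := by
    simpa using h1
  have h2 : AnalyticAt ℝ (fun y : ℝ => Gf ((y : ℂ) * Complex.I)) 0 := h1'.comp hof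
  have h3 : AnalyticAt ℝ (fun z : ℂ => z.re)
      ((fun y : ℝ => Gf ((y : ℂ) * Complex.I)) 0) := Complex.reCLM.analyticAt _
  exact AnalyticAt.comp (g := fun z : ℂ => z.re)
    (f := fun y : ℝ => Gf ((y : ℂ) * Complex.I)) h3 h2

lemma deriv_Ff : deriv Ff = Ff1 := funext fun y => (hasDerivAt_Ff y).deriv
lemma deriv_Ff1 : deriv Ff1 = Ff2 := funext fun y => (hasDerivAt_Ff1 y).deriv

lemma iteratedDeriv_Ff_0 : iteratedDeriv 0 Ff 0 = π ^ 2 / 12 := by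
  rw [iteratedDeriv_zero, Ff_zero]

lemma iteratedDeriv_Ff_1 : iteratedDeriv 1 Ff 0 = 0 := by
  rw [iteratedDeriv_one, deriv_Ff, Ff1_zero]

lemma iteratedDeriv_Ff_2 : iteratedDeriv 2 Ff 0 = 2 * (Real.log 2) ^ 2 - π ^ 2 / 6 := by
  rw [iteratedDeriv_succ, iteratedDeriv_one, deriv_Ff, deriv_Ff1, Ff2_zero]

lemma iteratedDeriv_Ff_3 : iteratedDeriv 3 Ff 0 = 0 := by
  rw [iteratedDeriv_succ, iteratedDeriv_succ, iteratedDeriv_one, deriv_Ff, deriv_Ff1]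
  exact deriv_even_zero Ff2 Ff2_even

lemma sfun_eq (N : ℕ) (y : ℝ) : sfun N y = N * Ff y - π ^ 2 * N / 12 := by
  rw [sfun, Ff, Gf]
  have hLam : Lam N y = (N : ℂ) * psi0 (1 + (y : ℂ) * Complex.I) := by
    rw [Lam, psi0, two_cpow_eq]
  rw [hLam, mul_div_assoc]
  have hre : ∀ w : ℂ, ((N : ℂ) * w).re = N * w.re := by
    intro w
    simp [Complex.mul_re]
  rw [hre]


/-- As y → 0, s(y) = N(log(2)² - π²/12)y² + O(y⁴). -/
theorem sfun_asymp_zero (N : ℕ) (hN : 0 < N) :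
    (fun y : ℝ => sfun N y - N * ((Real.log 2) ^ 2 - π ^ 2 / 12) * y ^ 2) =O[nhds 0]
      (fun y : ℝ => y ^ 4) := by
  obtain ⟨p, hp⟩ := analyticAt_Ff
  obtain ⟨r, hpr⟩ := hp
  have hp' : HasFPowerSeriesAt Ff p 0 := ⟨r, hpr⟩
  have hcoeff : ∀ (k : ℕ) (y : ℝ), p k (fun _ => y) = y ^ k * iteratedDeriv k Ff 0 / (k.factorial : ℝ) := by
    intro k y
    have hfs := hpr.factorial_smul y k
    have hmap : iteratedFDeriv ℝ k Ff 0 (fun _ => y) = y ^ k • iteratedDeriv k Ff 0 := by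
      rw [iteratedDeriv_eq_iteratedFDeriv]
      have hsm := (iteratedFDeriv ℝ k Ff 0).map_smul_univ
        (fun _ : Fin k => y) (fun _ : Fin k => (1 : ℝ))
      simp only [smul_eq_mul, mul_one, Finset.prod_const, Finset.card_univ,
        Fintype.card_fin] at hsm
      exact hsm
    rw [hmap] at hfs
    have hk : (k.factorial : ℝ) ≠ 0 := Nat.cast_ne_zero.mpr k.factorial_ne_zero
    rw [nsmul_eq_mul] at hfs
    rw [eq_div_iff hk]
    rw [smul_eq_mul] at hfs
    rw [mul_comm] at hfs
    exact hfs
  have hps : ∀ y : ℝ, p.partialSum 4 y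
      = π ^ 2 / 12 + ((Real.log 2) ^ 2 - π ^ 2 / 12) * y ^ 2 := by
    intro y
    rw [FormalMultilinearSeries.partialSum]
    rw [Finset.sum_range_succ, Finset.sum_range_succ, Finset.sum_range_succ,
      Finset.sum_range_one]
    rw [hcoeff 0 y, hcoeff 1 y, hcoeff 2 y, hcoeff 3 y,
      iteratedDeriv_Ff_0, iteratedDeriv_Ff_1, iteratedDeriv_Ff_2, iteratedDeriv_Ff_3]
    norm_num [Nat.factorial]
    ring
  have hO := hp'.isBigO_sub_partialSum_pow 4
  have hO2 := hO.const_mul_left (N : ℝ)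
  apply hO2.congr
  · intro y
    rw [sfun_eq, hps, zero_add]
    ring
  · intro y
    rw [Real.norm_eq_abs]
    rw [show |y| ^ 4 = |y ^ 4| from (_root_.abs_pow y 4).symm]
    exact abs_of_nonneg (by positivity)
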